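/- arXiv:0808.0235 — 4 statements merged into one kernel-verified Lean document; each statement's English description precedes it below -/
import Mathlib

section
/- Let n_1 ≤ n_2 be positive integers and N a positive integer. Suppose nonnegative integers m_1, m_2 satisfy n_1 m_1 + n_2 m_2 ≤ ⌊(n_1+n_2)/2⌋·N, 2 m_1 ≤ N, and 2 m_2 ≤ N. Then (m_1 + m_2)/N ≤ 1 if n_1 + n_2 is even, and (m_1 + m_2)/N ≤ (2 n_2 − 1)/(2 n_2) if n_1 + n_2 is odd. -/
/-- LP upper bound on the rate (m₁+m₂)/N of an orthogonal protocol for a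
2-parallel-path network with path lengths n₁ ≤ n₂. -/
theorem stmt_2 (n1 n2 N m1 m2 : ℕ) (h1 : 0 < n1) (h2 : 0 < n2) (h12 : n1 ≤ n2)
    (hN : 0 < N)
    (hc1 : n1 * m1 + n2 * m2 ≤ ((n1 + n2) / 2) * N)
    (hc2 : 2 * m1 ≤ N) (hc3 : 2 * m2 ≤ N) :
    (Even (n1 + n2) → ((m1 : ℝ) + m2) / N ≤ 1) ∧
    (Odd (n1 + n2) → ((m1 : ℝ) + m2) / N ≤ (2 * (n2 : ℝ) - 1) / (2 * n2)) := by
  have hNR : (0:ℝ) < N := by exact_mod_cast hN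
  constructor
  · intro _
    rw [div_le_one hNR]
    have : m1 + m2 ≤ N := by omega
    exact_mod_cast this
  · intro hodd
    obtain ⟨k, hk⟩ := hodd
    have hdiv : (n1 + n2) / 2 = k := by omega
    rw [hdiv] at hc1
    have hc1' : (n1:ℝ) * m1 + n2 * m2 ≤ k * N := by exact_mod_cast hc1
    have hc2' : (2:ℝ) * m1 ≤ N := by exact_mod_cast hc2
    have h12' : (n1:ℝ) ≤ n2 := by exact_mod_cast h12
    have h1' : (1:ℝ) ≤ n1 := by exact_mod_cast h1
    have hk' : (n1:ℝ) + n2 = 2 * k + 1 := by exact_mod_cast hk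
    have h2' : (0:ℝ) < 2 * n2 := by positivity
    rw [div_le_div_iff₀ hNR h2']
    nlinarith [mul_le_mul_of_nonneg_left hc2' (sub_nonneg.2 h12')]
end

section
/- For every odd cycle of length n = n_1 + n_2 (n_1 ≤ n_2), there exists an assignment of subsets D_j ⊆ {c_1,...,c_{2n_2}} to the edges of the cycle such that cyclically adjacent edges get disjoint subsets, edges on the shorter path receive exactly n_2 colors each, and edges on the longer path receive exactly n_2 − 1 colors each; hence the protocol achieves rate (2n_2 − 1)/(2n_2). -/
open Fin.NatCast in
/-- A "window" of `s` consecutive colors starting at `t` (mod `N`). -/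
def Wnd (N t s : ℕ) [NeZero N] : Finset (Fin N) :=
  (Finset.range s).image (fun i => ((t + i : ℕ) : Fin N))

lemma Wnd_card (N t s : ℕ) [NeZero N] (hs : s ≤ N) : (Wnd N t s).card = s := by
  rw [Wnd, Finset.card_image_of_injOn, Finset.card_range]
  intro i hi i' hi' h
  simp only [Finset.mem_coe, Finset.mem_range] at hi hi'
  have hv := congrArg Fin.val h
  simp only [Fin.val_natCast] at hv
  have h2 : i ≡ i' [MOD N] := Nat.ModEq.add_left_cancel' t hv
  have := h2.eq_of_lt_of_lt (lt_of_lt_of_le hi hs) (lt_of_lt_of_le hi' hs)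
  exact this

lemma Wnd_congr (N t t' s : ℕ) [NeZero N] (h : t % N = t' % N) :
    Wnd N t s = Wnd N t' s := by
  unfold Wnd
  apply Finset.image_congr
  intro i _
  have : (t + i) % N = (t' + i) % N := Nat.ModEq.add_right i h
  apply Fin.ext
  simp only [Fin.val_natCast, this]

lemma Wnd_disjoint (N t s s' : ℕ) [NeZero N] (h : s + s' ≤ N) :
    Disjoint (Wnd N t s) (Wnd N (t + s) s') := by
  rw [Finset.disjoint_left]
  intro x hx hx'
  simp only [Wnd, Finset.mem_image, Finset.mem_range] at hx hx'
  obtain ⟨i, hi, rfl⟩ := hx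
  obtain ⟨i', hi', he⟩ := hx'
  have hv := congrArg Fin.val he
  simp only [Fin.val_natCast] at hv
  have h2 : s + i' ≡ i [MOD N] := by
    have : t + (s + i') ≡ t + i [MOD N] := by
      rw [← add_assoc]; exact hv
    exact this.add_left_cancel' t
  have hN : 0 < N := Nat.pos_of_ne_zero (NeZero.ne N)
  have := h2.eq_of_lt_of_lt (by omega) (by omega)
  omega

/-- For an odd cycle of length n₁ + n₂ (n₁ ≤ n₂) there is an assignment of
color subsets from a palette of 2n₂ colors with cyclically adjacent edges
disjoint, edges of the shorter path getting n₂ colors and edges of the longer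
path getting n₂ - 1 colors; the rate equals (2n₂-1)/(2n₂). -/
theorem stmt_4 (n1 n2 : ℕ) (h1 : 0 < n1) (h12 : n1 ≤ n2) (hodd : Odd (n1 + n2)) :
    ∃ D : ℕ → Finset (Fin (2 * n2)),
      (∀ j < n1 + n2, Disjoint (D j) (D ((j + 1) % (n1 + n2)))) ∧
      (∀ j < n1, (D j).card = n2) ∧
      (∀ j, n1 ≤ j → j < n1 + n2 → (D j).card = n2 - 1) ∧
      ((n2 : ℝ) + ((n2 : ℝ) - 1)) / (2 * n2) = (2 * (n2 : ℝ) - 1) / (2 * n2) := by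
  have hn2 : 0 < n2 := lt_of_lt_of_le h1 h12
  haveI : NeZero (2 * n2) := ⟨by omega⟩
  obtain ⟨k, hk⟩ := hodd
  -- offsets and sizes
  set off : ℕ → ℕ := fun j => if j < n1 then j * n2 else n1 * n2 + (j - n1) * (n2 - 1)
    with hoff
  set sz : ℕ → ℕ := fun j => if j < n1 then n2 else n2 - 1 with hsz
  refine ⟨fun j => Wnd (2 * n2) (off j) (sz j), ?_, ?_, ?_, ?_⟩
  · intro j hj
    show Disjoint (Wnd (2 * n2) (off j) (sz j))
      (Wnd (2 * n2) (off ((j + 1) % (n1 + n2))) (sz ((j + 1) % (n1 + n2))))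
    rcases Nat.lt_or_ge (j + 1) (n1 + n2) with hlt | hge
    · rw [Nat.mod_eq_of_lt hlt]
      rcases Nat.lt_or_ge (j + 1) n1 with hs | hl
      · -- both on short path
        have hjs : j < n1 := by omega
        have e1 : off j = j * n2 := by simp [hoff, hjs]
        have e2 : off (j + 1) = j * n2 + n2 := by
          simp only [hoff, if_pos hs]; ring
        have e3 : sz j = n2 := by simp [hsz, hjs]
        have e4 : sz (j + 1) = n2 := by simp [hsz, hs]
        rw [e1, e2, e3, e4]
        exact Wnd_disjoint (2 * n2) (j * n2) n2 n2 (by omega)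
      · rcases Nat.lt_or_ge j n1 with hjs | hjl
        · -- boundary: j = n1 - 1
          have hj1 : j + 1 = n1 := by omega
          have e1 : off j = j * n2 := by simp [hoff, hjs]
          have e2 : off (j + 1) = j * n2 + n2 := by
            simp only [hoff, if_neg (by omega : ¬ j + 1 < n1)]
            have h0 : j + 1 - n1 = 0 := by omega
            rw [h0, ← hj1]; ring
          have e3 : sz j = n2 := by simp [hsz, hjs]
          have e4 : sz (j + 1) = n2 - 1 := by simp [hsz, hl]
          rw [e1, e2, e3, e4]
          exact Wnd_disjoint (2 * n2) (j * n2) n2 (n2 - 1) (by omega)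
        · -- both on long path
          have e1 : off j = n1 * n2 + (j - n1) * (n2 - 1) := by
            simp [hoff, Nat.not_lt.mpr hjl]
          have e2 : off (j + 1) = n1 * n2 + (j - n1) * (n2 - 1) + (n2 - 1) := by
            simp only [hoff, if_neg (Nat.not_lt.mpr hl)]
            have : j + 1 - n1 = (j - n1) + 1 := by omega
            rw [this]; ring
          have e3 : sz j = n2 - 1 := by simp [hsz, Nat.not_lt.mpr hjl]
          have e4 : sz (j + 1) = n2 - 1 := by simp [hsz, Nat.not_lt.mpr hl]
          rw [e1, e2, e3, e4]
          exact Wnd_disjoint (2 * n2) _ (n2 - 1) (n2 - 1) (by omega)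
    · -- wrap-around: j = n1 + n2 - 1
      have hj : j = n1 + n2 - 1 := by omega
      have hj1 : (j + 1) % (n1 + n2) = 0 := by
        have : j + 1 = n1 + n2 := by omega
        simp [this]
      rw [hj1]
      have hjl : ¬ j < n1 := by omega
      have e1 : off j = n1 * n2 + (n2 - 1) * (n2 - 1) := by
        have : j - n1 = n2 - 1 := by omega
        simp [hoff, hjl, this]
      have e3 : sz j = n2 - 1 := by simp [hsz, hjl]
      have e5 : off 0 = 0 := by simp [hoff, h1]
      have e6 : sz 0 = n2 := by simp [hsz, h1]
      rw [e1, e3, e5, e6]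
      have key : Wnd (2 * n2) (n1 * n2 + (n2 - 1) * (n2 - 1) + (n2 - 1)) n2
          = Wnd (2 * n2) 0 n2 := by
        apply Wnd_congr
        obtain ⟨m, rfl⟩ : ∃ m, n2 = m + 1 := ⟨n2 - 1, by omega⟩
        have hm : n1 + m = 2 * k := by omega
        have : n1 * (m + 1) + (m + 1 - 1) * (m + 1 - 1) + (m + 1 - 1)
            = 2 * (m + 1) * k := by
          have h' : m + 1 - 1 = m := by omega
          rw [h']
          have : n1 * (m + 1) + m * m + m = (n1 + m) * (m + 1) := by ring
          rw [this, hm]; ring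
        rw [this]
        simp [Nat.mul_mod_right]
      rw [← key]
      exact Wnd_disjoint (2 * n2) _ (n2 - 1) n2 (by omega)
  · intro j hj
    show (Wnd (2 * n2) (off j) (sz j)).card = n2
    simp only [hoff, hsz, if_pos hj]
    exact Wnd_card _ _ _ (by omega)
  · intro j hj _
    show (Wnd (2 * n2) (off j) (sz j)).card = n2 - 1
    simp only [hoff, hsz, if_neg (Nat.not_lt.mpr hj)]
    exact Wnd_card _ _ _ (by omega)
  · ring
end

section
/- Let N, L be positive integers, N_1 ≥ N_2 ≥ ... ≥ N_{L+1} > 0 with M_k positive integers and N = N_k·M_k for each k. For 0 ≤ r ≤ N, the infimum of Σ_{k=1}^{L+1} Σ_{j=1}^{M_k} α_{kj} over nonnegative reals α_{kj} subject to Σ_{i=1}^N (1 − Σ_{k=1}^{L+1} α_{k, e(i,k)})^+ ≤ r equals (N − r)/N_1, where e(i,k) ∈ [M_k] is a map such that each value j ∈ [M_k] is attained by exactly N_k indices i. Here x^+ = max(x, 0). -/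
/-- Exact outage-exponent optimization for a balanced parallel product channel:
the minimum of Σ_{k,j} α_{kj} over nonnegative α subject to
Σ_i (1 - Σ_k α_{k, e(i,k)})⁺ ≤ r equals (N - r)/N_1. -/
theorem stmt_7 (L N : ℕ) (hN : 0 < N) (Nk Mk : Fin (L + 1) → ℕ)
    (hNkpos : ∀ k, 0 < Nk k) (hMkpos : ∀ k, 0 < Mk k)
    (hmono : ∀ j k : Fin (L + 1), j ≤ k → Nk k ≤ Nk j)
    (hprod : ∀ k, N = Nk k * Mk k)
    (e : Fin N → ∀ k : Fin (L + 1), Fin (Mk k))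
    (hbalanced : ∀ (k : Fin (L + 1)) (j : Fin (Mk k)),
      (Finset.univ.filter (fun i => e i k = j)).card = Nk k)
    (r : ℝ) (hr0 : 0 ≤ r) (hrN : r ≤ N) :
    IsLeast {s : ℝ | ∃ α : ∀ k : Fin (L + 1), Fin (Mk k) → ℝ,
        (∀ k j, 0 ≤ α k j) ∧
        (∑ i, max (1 - ∑ k, α k (e i k)) 0 ≤ r) ∧
        s = ∑ k, ∑ j, α k j}
      (((N : ℝ) - r) / (Nk 0 : ℝ)) := by
  have hNpos : (0:ℝ) < (N:ℝ) := by exact_mod_cast hN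
  have hN0pos : (0:ℝ) < (Nk 0 : ℝ) := by exact_mod_cast hNkpos 0
  constructor
  · refine ⟨fun k => if h : k = 0 then (fun _ => ((N:ℝ) - r)/N) else (fun _ => 0), ?_, ?_, ?_⟩
    · intro k j
      by_cases h : k = 0 <;> simp [h]
      · exact div_nonneg (by linarith) hNpos.le
    · have hsum : ∀ i : Fin N, (∑ k, (if h : k = 0 then (fun _ : Fin (Mk k) => ((N:ℝ) - r)/N) else (fun _ => 0)) (e i k)) = ((N:ℝ) - r)/N := by
        intro i
        rw [Finset.sum_eq_single (0 : Fin (L+1))]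
        · simp
        · intro b _ hb; simp [hb]
        · simp
      calc ∑ i, max (1 - ∑ k, (if h : k = 0 then (fun _ : Fin (Mk k) => ((N:ℝ) - r)/N) else (fun _ => 0)) (e i k)) 0
          = ∑ _i : Fin N, r / N := by
            refine Finset.sum_congr rfl fun i _ => ?_
            rw [hsum i]
            have : (1:ℝ) - ((N:ℝ) - r)/N = r / N := by field_simp; ring
            rw [this, max_eq_left (by positivity)]
        _ ≤ r := le_of_eq ?_
      rw [Finset.sum_const, Finset.card_univ, Fintype.card_fin, nsmul_eq_mul]
      field_simp
    · rw [Finset.sum_eq_single (0 : Fin (L+1))]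
      · have hM0 : (N:ℝ) = (Nk 0 : ℝ) * (Mk 0 : ℝ) := by exact_mod_cast hprod 0
        simp only [dif_pos rfl, eq_self_iff_true, dite_true, ↓reduceDIte, Finset.sum_const, Finset.card_univ, Fintype.card_fin,
          nsmul_eq_mul]
        field_simp
        rw [hM0]; ring
      · intro b _ hb; simp [hb]
      · simp
  · rintro s ⟨α, hpos, hfeas, rfl⟩
    -- key: N - r ≤ N_0 * Σ α
    have h1 : (N:ℝ) - ∑ i, ∑ k, α k (e i k) ≤ r := by
      have : ∀ i : Fin N, 1 - ∑ k, α k (e i k) ≤ max (1 - ∑ k, α k (e i k)) 0 :=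
        fun i => le_max_left _ _
      calc (N:ℝ) - ∑ i, ∑ k, α k (e i k)
          = ∑ i : Fin N, (1 - ∑ k, α k (e i k)) := by
            rw [Finset.sum_sub_distrib, Finset.sum_const, Finset.card_univ,
              Fintype.card_fin, nsmul_eq_mul, mul_one]
        _ ≤ ∑ i, max (1 - ∑ k, α k (e i k)) 0 := Finset.sum_le_sum fun i _ => this i
        _ ≤ r := hfeas
    have h2 : ∑ i, ∑ k, α k (e i k) ≤ (Nk 0 : ℝ) * ∑ k, ∑ j, α k j := by
      rw [Finset.sum_comm, Finset.mul_sum]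
      refine Finset.sum_le_sum fun k _ => ?_
      have hfib : ∑ i : Fin N, α k (e i k) = ∑ j : Fin (Mk k), (Nk k : ℝ) * α k j := by
        rw [← Finset.sum_fiberwise (Finset.univ) (fun i => e i k) (fun i => α k (e i k))]
        refine Finset.sum_congr rfl fun j _ => ?_
        rw [Finset.sum_congr rfl (fun i hi => by
          rw [(Finset.mem_filter.mp hi).2]), Finset.sum_const, hbalanced k j,
          nsmul_eq_mul]
      rw [hfib, Finset.mul_sum]
      refine Finset.sum_le_sum fun j _ => ?_
      have : (Nk k : ℝ) ≤ (Nk 0 : ℝ) := by exact_mod_cast hmono 0 k (Fin.zero_le k)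
      exact mul_le_mul_of_nonneg_right this (hpos k j)
    rw [div_le_iff₀ hN0pos]
    have := h1
    nlinarith [h2]
end

section
/- For K ≥ 4, define an edge coloring of the KPP network with colors c_0,...,c_{K−1} (indices mod K) by assigning to edge e_{ij} (the j-th edge on path i, 1 ≤ j ≤ n_i) the color: G_i cycles through (c_i, c_{i+1}, c_{i+2}) for j ≢ 0 positions (i.e., A_{ij} = c_{i + ((j−1) mod 3)} for j < n_i) and A_{i n_i} = c_{i+3}. Then this coloring satisfies: (1) the colors of first edges A_{i1} are pairwise distinct across paths; (2) the colors of last edges A_{i n_i} are pairwise distinct; (3) adjacent edges on a path receive distinct colors; (4) moreover edges at distance two on a path receive distinct colors (no back-flow). -/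
/-- The explicit coloring A_{ij} = c_{i+(j-1) mod 3} for j < n_i and
A_{i n_i} = c_{i+3} of a KPP network with K ≥ 4 paths satisfies: distinct first
edges, distinct last edges, adjacent edges distinct (half-duplex), and edges at
distance two distinct (no back-flow). -/
theorem stmt_12 (K : ℕ) (hK : 4 ≤ K) (n : Fin K → ℕ) (hn : ∀ i, 2 ≤ n i) :
    let A : Fin K → ℕ → ZMod K := fun i j =>
      if j < n i then ((i : ℕ) : ZMod K) + (((j - 1) % 3 : ℕ) : ZMod K)
      else ((i : ℕ) : ZMod K) + 3
    (∀ i i' : Fin K, i ≠ i' → A i 1 ≠ A i' 1) ∧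
    (∀ i i' : Fin K, i ≠ i' → A i (n i) ≠ A i' (n i')) ∧
    (∀ i : Fin K, ∀ j, 1 ≤ j → j < n i → A i j ≠ A i (j + 1)) ∧
    (∀ i : Fin K, ∀ j, 1 ≤ j → j + 2 ≤ n i → A i j ≠ A i (j + 2)) := by
  intro A
  have key : ∀ a b : ℕ, a < K → b < K → ((a : ZMod K) = (b : ZMod K)) → a = b := by
    intro a b ha hb h
    have := (ZMod.natCast_eq_natCast_iff a b K).mp h
    simpa [Nat.ModEq, Nat.mod_eq_of_lt ha, Nat.mod_eq_of_lt hb] using this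
  refine ⟨?_, ?_, ?_, ?_⟩
  · intro i i' hne h
    have h1 : (1 : ℕ) < n i := by have := hn i; omega
    have h1' : (1 : ℕ) < n i' := by have := hn i'; omega
    simp only [A, if_pos h1, if_pos h1'] at h
    have : ((i : ℕ) : ZMod K) = ((i' : ℕ) : ZMod K) := by
      have h' := add_right_cancel h
      exact h'
    exact hne (Fin.ext (key _ _ i.isLt i'.isLt this))
  · intro i i' hne h
    simp only [A, lt_irrefl, if_neg (lt_irrefl _)] at h
    have : ((i : ℕ) : ZMod K) = ((i' : ℕ) : ZMod K) := add_right_cancel h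
    exact hne (Fin.ext (key _ _ i.isLt i'.isLt this))
  · intro i j hj hjn h
    simp only [A, if_pos hjn] at h
    by_cases h2 : j + 1 < n i
    · rw [if_pos h2] at h
      have h' := add_left_cancel h
      have := key _ _ (by omega : (j-1)%3 < K) (by omega : (j+1-1)%3 < K) h'
      omega
    · rw [if_neg h2] at h
      have h' := add_left_cancel h
      have h3 : ((3 : ℕ) : ZMod K) = (3 : ZMod K) := by push_cast; ring
      rw [← h3] at h'
      have := key _ _ (by omega : (j-1)%3 < K) (by omega : 3 < K) h'
      omega
  · intro i j hj hjn h
    have hjlt : j < n i := by omega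
    simp only [A, if_pos hjlt] at h
    by_cases h2 : j + 2 < n i
    · rw [if_pos h2] at h
      have h' := add_left_cancel h
      have := key _ _ (by omega : (j-1)%3 < K) (by omega : (j+2-1)%3 < K) h'
      omega
    · rw [if_neg h2] at h
      have h' := add_left_cancel h
      have h3 : ((3 : ℕ) : ZMod K) = (3 : ZMod K) := by push_cast; ring
      rw [← h3] at h'
      have := key _ _ (by omega : (j-1)%3 < K) (by omega : 3 < K) h'
      omega
end
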